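/- Soundness of the sequential-measurement QSAT verifier: Let Π_1, …, Π_M be orthogonal projectors on a finite-dimensional complex Hilbert space and suppose Δ > 0 is such that ⟨ψ, (Σ_{m=1}^M Π_m) ψ⟩ ≥ Δ ‖ψ‖² for all ψ (i.e., the ground-state energy of Σ Π_m is at least Δ). Then for every unit vector ψ, the probability that measuring Π_1, then Π_2, …, then Π_M all yield outcome 0 satisfies ‖(Id − Π_M)(Id − Π_{M−1}) ⋯ (Id − Π_1) ψ‖² ≤ 1 − Δ/M². In particular, if Δ ≥ 1/poly in the instance size and M is polynomial, any proposed proof state is rejected with at least inverse-polynomial probability. -/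

import Mathlib

open scoped BigOperators

noncomputable section

section Aux

variable {E : Type*} [NormedAddCommGroup E] [InnerProductSpace ℂ E]

lemma proj_inner_re (P : E →ₗ[ℂ] E) (hP : P ∘ₗ P = P)
    (hsa : ∀ x y : E, (inner ℂ (P x) y : ℂ) = inner ℂ x (P y)) (x : E) :
    (inner ℂ x (P x) : ℂ).re = ‖P x‖ ^ 2 := by
  have h1 : (inner ℂ (P x) (P x) : ℂ) = inner ℂ x (P x) := by
    rw [hsa]
    congr 1
    exact congrFun (congrArg DFunLike.coe hP) x
  rw [← h1, inner_self_eq_norm_sq_to_K]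
  norm_cast

lemma proj_pyth (P : E →ₗ[ℂ] E) (hP : P ∘ₗ P = P)
    (hsa : ∀ x y : E, (inner ℂ (P x) y : ℂ) = inner ℂ x (P y)) (x : E) :
    ‖x‖ ^ 2 = ‖P x‖ ^ 2 + ‖x - P x‖ ^ 2 := by
  have hPP : P (P x) = P x := congrFun (congrArg DFunLike.coe hP) x
  have h1 : (inner ℂ (P x) (P x) : ℂ) = inner ℂ x (P x) := by rw [hsa, hPP]
  have horth : (inner ℂ (P x) (x - P x) : ℂ) = 0 := by
    rw [inner_sub_right, hsa x x, h1, sub_self]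
  have : ‖P x + (x - P x)‖ ^ 2 = ‖P x‖ ^ 2 + 2 * (inner ℂ (P x) (x - P x) : ℂ).re + ‖x - P x‖ ^ 2 :=
    norm_add_sq (𝕜 := ℂ) _ _
  simp only [add_sub_cancel, horth, Complex.zero_re, mul_zero, add_zero] at this
  linarith [this]

lemma proj_norm_le (P : E →ₗ[ℂ] E) (hP : P ∘ₗ P = P)
    (hsa : ∀ x y : E, (inner ℂ (P x) y : ℂ) = inner ℂ x (P y)) (x : E) :
    ‖P x‖ ≤ ‖x‖ := by
  have h := proj_pyth P hP hsa x
  nlinarith [norm_nonneg (P x), norm_nonneg x, sq_nonneg ‖x - P x‖]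

end Aux

/-- `seqMeas M Pr n` is the product `(Id - Π_n) ⋯ (Id - Π_2)(Id - Π_1)` of the first
`n` complemented measurement operators: the unnormalized post-measurement map after
sequentially measuring `Π_1, …, Π_n` and obtaining outcome `0` each time. -/
def seqMeas {E : Type*} [NormedAddCommGroup E] [InnerProductSpace ℂ E]
    (M : ℕ) (Pr : Fin M → (E →ₗ[ℂ] E)) : ℕ → (E →ₗ[ℂ] E)
  | 0 => LinearMap.id
  | n + 1 =>
    if h : n < M then (LinearMap.id - Pr ⟨n, h⟩) ∘ₗ seqMeas M Pr n else seqMeas M Pr n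

/-- **Soundness of the sequential-measurement QSAT verifier.**  If the orthogonal
projectors `Π_1, …, Π_M` satisfy `⟨ψ, (∑ Π_m) ψ⟩ ≥ Δ ‖ψ‖²` for all `ψ`, then for
every unit vector `ψ` the probability
`‖(Id - Π_M) ⋯ (Id - Π_1) ψ‖²` that all sequential measurements yield outcome `0` is
at most `1 - Δ/M²`. -/
theorem sequential_verifier_soundness {E : Type*} [NormedAddCommGroup E]
    [InnerProductSpace ℂ E] [FiniteDimensional ℂ E]
    (M : ℕ) (Pr : Fin M → (E →ₗ[ℂ] E))
    (h_idem : ∀ m, (Pr m) ∘ₗ (Pr m) = Pr m)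
    (h_sa : ∀ m, ∀ x y : E, (inner ℂ ((Pr m) x) y : ℂ) = inner ℂ x ((Pr m) y))
    (Δ : ℝ) (hΔ : 0 < Δ)
    (h_energy : ∀ ψ : E, Δ * ‖ψ‖ ^ 2 ≤ (inner ℂ ψ ((∑ m, Pr m) ψ) : ℂ).re) :
    ∀ ψ : E, ‖ψ‖ = 1 →
      ‖seqMeas M Pr M ψ‖ ^ 2 ≤ 1 - Δ / (M : ℝ) ^ 2 := by
  intro ψ hψ
  rcases Nat.eq_zero_or_pos M with hM | hM
  · subst hM
    exfalso
    have h := h_energy ψ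
    simp [hψ, Finset.univ_eq_empty] at h
    linarith
  have hMR : (0 : ℝ) < M := by exact_mod_cast hM
  set φ : ℕ → E := fun n => seqMeas M Pr n ψ with hφ
  set b : ℕ → ℝ := fun j => if h : j < M then ‖Pr ⟨j, h⟩ (φ j)‖ else 0 with hb
  have hb_nonneg : ∀ j, 0 ≤ b j := by
    intro j
    simp only [hb]
    split
    · exact norm_nonneg _
    · exact le_rfl
  have hstep : ∀ n (h : n < M), φ (n + 1) = φ n - Pr ⟨n, h⟩ (φ n) := by
    intro n h
    show seqMeas M Pr (n + 1) ψ = _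
    rw [seqMeas, dif_pos h]
    simp [LinearMap.sub_apply, LinearMap.comp_apply]; rfl
  have hφ0 : φ 0 = ψ := rfl
  have hnorm : ∀ n, n ≤ M → ‖φ n‖ ^ 2 = 1 - ∑ j ∈ Finset.range n, (b j) ^ 2 := by
    intro n
    induction n with
    | zero => intro _; simp [hφ0, hψ]
    | succ n ih =>
      intro h
      have hlt : n < M := h
      have hbn : b n = ‖Pr ⟨n, hlt⟩ (φ n)‖ := by simp only [hb]; rw [dif_pos hlt]
      have hp := proj_pyth (Pr ⟨n, hlt⟩) (h_idem _) (h_sa _) (φ n)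
      rw [Finset.sum_range_succ, hstep n hlt]
      have ihn := ih (le_of_lt hlt)
      rw [hbn]
      linarith
  have hdiff : ∀ n, n ≤ M → ‖ψ - φ n‖ ≤ ∑ j ∈ Finset.range n, b j := by
    intro n
    induction n with
    | zero => intro _; simp [hφ0]
    | succ n ih =>
      intro h
      have hlt : n < M := h
      have hbn : b n = ‖Pr ⟨n, hlt⟩ (φ n)‖ := by simp only [hb]; rw [dif_pos hlt]
      rw [Finset.sum_range_succ, hstep n hlt]
      have : ψ - (φ n - Pr ⟨n, hlt⟩ (φ n)) = (ψ - φ n) + Pr ⟨n, hlt⟩ (φ n) := by abel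
      rw [this]
      calc ‖(ψ - φ n) + Pr ⟨n, hlt⟩ (φ n)‖ ≤ ‖ψ - φ n‖ + ‖Pr ⟨n, hlt⟩ (φ n)‖ := norm_add_le _ _
        _ ≤ (∑ j ∈ Finset.range n, b j) + b n := by
            rw [hbn]; exact add_le_add_left (ih (le_of_lt hlt)) _
  set S : ℝ := ∑ j ∈ Finset.range M, b j with hS
  have hkey : ∀ m : Fin M, ‖Pr m ψ‖ ≤ S := by
    intro m
    have hsplit : Pr m ψ = Pr m (φ m.val) + Pr m (ψ - φ m.val) := by
      rw [← map_add]
      congr 1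
      abel
    have hbm : b m.val = ‖Pr m (φ m.val)‖ := by
      simp only [hb]; rw [dif_pos m.isLt]
    calc ‖Pr m ψ‖ ≤ ‖Pr m (φ m.val)‖ + ‖Pr m (ψ - φ m.val)‖ := by rw [hsplit]; exact norm_add_le _ _
      _ ≤ b m.val + ‖ψ - φ m.val‖ := by
          rw [hbm]
          exact add_le_add_right (proj_norm_le (Pr m) (h_idem m) (h_sa m) _) _
      _ ≤ b m.val + ∑ j ∈ Finset.range m.val, b j :=
          add_le_add_right (hdiff m.val (le_of_lt m.isLt)) _
      _ = ∑ j ∈ Finset.range (m.val + 1), b j := by rw [Finset.sum_range_succ]; ring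
      _ ≤ S := Finset.sum_le_sum_of_subset_of_nonneg
          (Finset.range_subset_range.mpr m.isLt) (fun j _ _ => hb_nonneg j)
  have hS_nonneg : 0 ≤ S := Finset.sum_nonneg fun j _ => hb_nonneg j
  -- energy bound
  have hE : Δ ≤ ∑ m : Fin M, ‖Pr m ψ‖ ^ 2 := by
    have h := h_energy ψ
    rw [hψ] at h
    have heq : (inner ℂ ψ ((∑ m, Pr m) ψ) : ℂ).re = ∑ m : Fin M, ‖Pr m ψ‖ ^ 2 := by
      rw [LinearMap.sum_apply, inner_sum, Complex.re_sum]
      exact Finset.sum_congr rfl fun m _ => proj_inner_re (Pr m) (h_idem m) (h_sa m) ψ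
    rw [heq] at h
    linarith
  have hsum_le : ∑ m : Fin M, ‖Pr m ψ‖ ^ 2 ≤ M * S ^ 2 := by
    calc ∑ m : Fin M, ‖Pr m ψ‖ ^ 2 ≤ ∑ _m : Fin M, S ^ 2 :=
          Finset.sum_le_sum fun m _ => pow_le_pow_left₀ (norm_nonneg _) (hkey m) 2
      _ = M * S ^ 2 := by simp [Finset.card_univ, mul_comm]
  have hCS : S ^ 2 ≤ M * ∑ j ∈ Finset.range M, (b j) ^ 2 := by
    have := sq_sum_le_card_mul_sum_sq (s := Finset.range M) (f := b)
    simpa using this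
  have hp : ‖φ M‖ ^ 2 = 1 - ∑ j ∈ Finset.range M, (b j) ^ 2 := hnorm M le_rfl
  have hfinal : Δ ≤ (M : ℝ) ^ 2 * (1 - ‖φ M‖ ^ 2) := by
    have h1 : Δ ≤ M * (M * ∑ j ∈ Finset.range M, (b j) ^ 2) := by
      calc Δ ≤ ∑ m : Fin M, ‖Pr m ψ‖ ^ 2 := hE
        _ ≤ M * S ^ 2 := hsum_le
        _ ≤ M * (M * ∑ j ∈ Finset.range M, (b j) ^ 2) :=
            mul_le_mul_of_nonneg_left hCS (le_of_lt hMR)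
    have h2 : ∑ j ∈ Finset.range M, (b j) ^ 2 = 1 - ‖φ M‖ ^ 2 := by linarith
    rw [h2] at h1
    nlinarith
  have : Δ / (M : ℝ) ^ 2 ≤ 1 - ‖φ M‖ ^ 2 := by
    rw [div_le_iff₀ (by positivity)]
    nlinarith
  show ‖φ M‖ ^ 2 ≤ 1 - Δ / (M : ℝ) ^ 2
  linarith

end
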